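/- Let A = {a, b} be a two-letter alphabet and let X be a subset of a*ba* (words of the form a^i b a^j). If X ∪ {a^n} is a code, then Card(X) ≤ n. -/

import Mathlib

/-- `X` is a code: every word of `X*` has a unique factorization into elements of `X`. -/
def IsCode {A : Type*} (X : Set (List A)) : Prop :=
  ∀ l m : List (List A), (∀ w ∈ l, w ∈ X) → (∀ w ∈ m, w ∈ X) →
    l.flatten = m.flatten → l = m

open Finset

noncomputable def wt (p : ℝ) (w : List Bool) : ℝ :=
  (w.map (fun b => if b then p else 1 - p)).prod

lemma wt_pos {p : ℝ} (h0 : 0 < p) (h1 : p < 1) (w : List Bool) : 0 < wt p w := by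
  apply List.prod_pos
  intro x hx
  simp only [List.mem_map] at hx
  obtain ⟨b, _, rfl⟩ := hx
  cases b <;> simp <;> linarith

lemma wt_append (p : ℝ) (u v : List Bool) : wt p (u ++ v) = wt p u * wt p v := by
  simp [wt]

lemma wt_flatten (p : ℝ) (l : List (List Bool)) :
    wt p l.flatten = (l.map (wt p)).prod := by
  induction l with
  | nil => simp [wt]
  | cons h t ih => simp [List.flatten_cons, wt_append, ih]

lemma wt_replicate (p : ℝ) (i : ℕ) : wt p (List.replicate i true) = p ^ i := by
  simp [wt, List.map_replicate]

lemma wt_ofFn (p : ℝ) {L : ℕ} (f : Fin L → Bool) :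
    wt p (List.ofFn f) = ∏ i, (if f i then p else 1 - p) := by
  simp [wt, List.map_ofFn, List.prod_ofFn]

def wordsOf (L : ℕ) : Finset (List Bool) :=
  (Finset.univ : Finset (Fin L → Bool)).image List.ofFn

lemma length_of_mem_wordsOf {L : ℕ} {w : List Bool} (h : w ∈ wordsOf L) : w.length = L := by
  simp only [wordsOf, mem_image] at h
  obtain ⟨f, _, rfl⟩ := h
  simp

lemma self_mem_wordsOf (w : List Bool) : w ∈ wordsOf w.length := by
  simp only [wordsOf, mem_image]
  exact ⟨w.get, mem_univ _, List.ofFn_get w⟩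

lemma sum_wordsOf (p : ℝ) (L : ℕ) : ∑ w ∈ wordsOf L, wt p w = 1 := by
  rw [wordsOf, Finset.sum_image (by intro f _ g _ h; exact List.ofFn_injective h)]
  have : ∀ f : Fin L → Bool, wt p (List.ofFn f) = ∏ i, (if f i then p else 1 - p) :=
    wt_ofFn p
  simp only [this]
  have h2 := Finset.prod_univ_sum (κ := fun _ : Fin L => Bool)
    (t := fun _ => (Finset.univ : Finset Bool)) (f := fun _ b => if b then p else 1 - p)
  rw [Fintype.piFinset_univ] at h2
  rw [← h2]
  simp


lemma kraft (C : Finset (List Bool)) (hcode : IsCode (↑C : Set (List Bool)))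
    (hne : ∀ w ∈ C, w ≠ []) {p : ℝ} (h0 : 0 < p) (h1 : p < 1) :
    ∑ w ∈ C, wt p w ≤ 1 := by
  set M : ℕ := C.sup List.length with hM
  set F : ℝ := ∑ w ∈ C, wt p w with hF
  have hF0 : 0 ≤ F := Finset.sum_nonneg fun w _ => (wt_pos h0 h1 w).le
  -- main power bound
  have hpow : ∀ k : ℕ, 1 ≤ k → F ^ k ≤ (k * M : ℕ) := by
    intro k hk
    have e1 : F ^ k = ∑ f ∈ Fintype.piFinset (fun _ : Fin k => C),
        wt p (List.ofFn f).flatten := by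
      have e0 : F ^ k = ∏ _i : Fin k, ∑ w ∈ C, wt p w := by
        simp [hF, Finset.prod_const]
      rw [e0, Finset.prod_univ_sum]
      apply Finset.sum_congr rfl
      intro f _
      rw [wt_flatten, List.map_ofFn, List.prod_ofFn]
      rfl
    have hinj : ∀ f ∈ Fintype.piFinset (fun _ : Fin k => C),
        ∀ g ∈ Fintype.piFinset (fun _ : Fin k => C),
        (List.ofFn f).flatten = (List.ofFn g).flatten → f = g := by
      intro f hf g hg h
      have hf' : ∀ w ∈ List.ofFn f, w ∈ (↑C : Set (List Bool)) := by
        intro w hw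
        obtain ⟨i, rfl⟩ := List.mem_ofFn.1 hw
        exact Fintype.mem_piFinset.1 hf i
      have hg' : ∀ w ∈ List.ofFn g, w ∈ (↑C : Set (List Bool)) := by
        intro w hw
        obtain ⟨i, rfl⟩ := List.mem_ofFn.1 hw
        exact Fintype.mem_piFinset.1 hg i
      exact List.ofFn_injective (hcode _ _ hf' hg' h)
    have e2 : F ^ k = ∑ w ∈ (Fintype.piFinset (fun _ : Fin k => C)).image
        (fun f => (List.ofFn f).flatten), wt p w := by
      rw [Finset.sum_image hinj, e1]
    have hsub : (Fintype.piFinset (fun _ : Fin k => C)).image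
        (fun f => (List.ofFn f).flatten) ⊆ (Finset.Icc 1 (k * M)).biUnion wordsOf := by
      intro w hw
      simp only [mem_image] at hw
      obtain ⟨f, hf, rfl⟩ := hw
      rw [Finset.mem_biUnion]
      refine ⟨(List.ofFn f).flatten.length, ?_, self_mem_wordsOf _⟩
      have hlen : (List.ofFn f).flatten.length = ∑ i : Fin k, (f i).length := by
        rw [List.length_flatten, List.map_ofFn, List.sum_ofFn]
        rfl
      rw [Finset.mem_Icc, hlen]
      constructor
      · calc 1 ≤ ∑ _i : Fin k, 1 := by simp [hk]
          _ ≤ ∑ i : Fin k, (f i).length := by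
              apply Finset.sum_le_sum
              intro i _
              have := Fintype.mem_piFinset.1 hf i
              exact List.length_pos_iff.2 (hne _ this)
      · calc ∑ i : Fin k, (f i).length ≤ ∑ _i : Fin k, M := by
              apply Finset.sum_le_sum
              intro i _
              exact Finset.le_sup (Fintype.mem_piFinset.1 hf i)
          _ = k * M := by simp [Finset.sum_const, mul_comm]
    have e3 : ∑ w ∈ (Finset.Icc 1 (k * M)).biUnion wordsOf, wt p w = (k * M : ℕ) := by
      rw [Finset.sum_biUnion]
      · rw [Finset.sum_congr rfl (fun L _ => sum_wordsOf p L)]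
        simp [Nat.card_Icc]
      · intro L1 h1' L2 h2' hne'
        simp only [Function.onFun]
        rw [Finset.disjoint_left]
        intro w hw1 hw2
        exact hne' ((length_of_mem_wordsOf hw1).symm.trans (length_of_mem_wordsOf hw2))
    calc F ^ k = _ := e2
      _ ≤ ∑ w ∈ (Finset.Icc 1 (k * M)).biUnion wordsOf, wt p w := by
          apply Finset.sum_le_sum_of_subset_of_nonneg hsub
          intro w _ _
          exact (wt_pos h0 h1 w).le
      _ = (k * M : ℕ) := e3
  -- conclude F ≤ 1
  by_contra hc
  push_neg at hc
  set c : ℝ := F - 1 with hcdef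
  have hc0 : 0 < c := by linarith
  obtain ⟨j, hj⟩ := exists_nat_gt (max 1 (2 * M / c ^ 2))
  have hj1 : (1 : ℝ) ≤ j := le_trans (le_max_left _ _) hj.le
  have hjM : 2 * (M : ℝ) < j * c ^ 2 := by
    have := lt_of_le_of_lt (le_max_right 1 (2 * M / c ^ 2)) hj
    calc 2 * (M : ℝ) = (2 * M / c ^ 2) * c ^ 2 := by field_simp
      _ < j * c ^ 2 := by
          have hc2 : (0:ℝ) < c ^ 2 := by positivity
          exact mul_lt_mul_of_pos_right this hc2
  have hjnat : 1 ≤ j := by exact_mod_cast hj1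
  have key := hpow (2 * j) (by omega)
  have b1 : (1 : ℝ) + j * c ≤ F ^ j := by
    have := one_add_mul_le_pow (a := c) (by linarith) j
    calc (1 : ℝ) + j * c ≤ (1 + c) ^ j := this
      _ = F ^ j := by rw [hcdef]; ring_nf
  have b2 : ((j : ℝ) * c) ^ 2 ≤ F ^ (2 * j) := by
    have hjc : 0 ≤ (j : ℝ) * c := by positivity
    calc ((j : ℝ) * c) ^ 2 ≤ (1 + j * c) ^ 2 := by nlinarith
      _ ≤ (F ^ j) ^ 2 := by nlinarith
      _ = F ^ (2 * j) := by rw [← pow_mul, mul_comm]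
  have hcast : ((2 * j * M : ℕ) : ℝ) = 2 * (j : ℝ) * M := by push_cast; ring
  rw [hcast] at key
  nlinarith [sq_nonneg ((j:ℝ) * c)]

/-- Over the two-letter alphabet `{a, b}` (here `a := true`, `b := false`),
if `X ⊆ a*ba*` and `X ∪ {a^n}` is a code, then `Card(X) ≤ n`. -/
theorem card_le_of_bayonet_code (n : ℕ) (X : Set (List Bool))
    (hX : ∀ x ∈ X, ∃ i j : ℕ,
      x = List.replicate i true ++ [false] ++ List.replicate j true)
    (hcode : IsCode (X ∪ {List.replicate n true})) :
    X.Finite ∧ X.ncard ≤ n := by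
  -- n = 0 is impossible
  rcases Nat.eq_zero_or_pos n with hn0 | hn
  · exfalso
    have h := hcode [[]] [] (by
      intro w hw
      simp only [List.mem_singleton] at hw
      subst hw
      right
      simp [hn0]) (by simp) (by simp)
    simp at h
  -- key: every finite subset of X has card ≤ n
  have key : ∀ Y : Finset (List Bool), ↑Y ⊆ X → Y.card ≤ n := by
    intro Y hY
    by_contra hcard
    push_neg at hcard
    -- the constant word aⁿ is not in Y
    have han : List.replicate n true ∉ Y := by
      intro h
      obtain ⟨i, j, hij⟩ := hX _ (hY h)
      have : false ∈ List.replicate n true := by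
        rw [hij]; simp
      simp [List.mem_replicate] at this
    set C : Finset (List Bool) := insert (List.replicate n true) Y with hC
    have hsubC : (↑C : Set (List Bool)) ⊆ X ∪ {List.replicate n true} := by
      intro w hw
      simp only [hC, Finset.coe_insert, Set.mem_insert_iff] at hw
      rcases hw with rfl | hw
      · right; rfl
      · left; exact hY hw
    have hcodeC : IsCode (↑C : Set (List Bool)) := by
      intro l m hl hm h
      exact hcode l m (fun w hw => hsubC (hl w hw)) (fun w hw => hsubC (hm w hw)) h
    have hneC : ∀ w ∈ C, w ≠ [] := by
      intro w hw
      simp only [hC, Finset.mem_insert] at hw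
      rcases hw with rfl | hw
      · intro h
        have : (List.replicate n true).length = 0 := by rw [h]; simp
        simp at this
        omega
      · obtain ⟨i, j, rfl⟩ := hX _ (hY hw)
        simp
    set M : ℕ := C.sup List.length with hM
    set K : ℝ := ((n : ℝ) + 1) * M with hK
    have hKnn : (0 : ℝ) ≤ K := by positivity
    set ε : ℝ := 1 / (K + 2) with hε
    have hε0 : 0 < ε := by positivity
    have hεhalf : ε ≤ 1 / 2 := by
      rw [hε]
      rw [div_le_div_iff₀ (by linarith) (by norm_num)]
      linarith
    set p : ℝ := 1 - ε with hp
    have hp0 : 0 < p := by rw [hp]; linarith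
    have hp1 : p < 1 := by rw [hp]; linarith
    have hkraft := kraft C hcodeC hneC hp0 hp1
    -- lower bound each word's weight
    have hwt : ∀ w ∈ Y, ε * (1 - M * ε) ≤ wt p w := by
      intro w hw
      obtain ⟨i, j, hij⟩ := hX _ (hY hw)
      have hlen : w.length = i + 1 + j := by
        rw [hij]; simp; omega
      have hwM : w.length ≤ M := Finset.le_sup (Finset.mem_insert_of_mem hw)
      have hijM : i + j ≤ M := by omega
      have hval : wt p w = p ^ i * ε * p ^ j := by
        rw [hij, wt_append, wt_append, wt_replicate, wt_replicate]
        simp [wt, hp]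
      have hpij : p ^ M ≤ p ^ i * p ^ j := by
        rw [← pow_add]
        exact pow_le_pow_of_le_one hp0.le hp1.le hijM
      have hbern : 1 - (M : ℝ) * ε ≤ p ^ M := by
        have := one_add_mul_le_pow (a := -ε) (by linarith) M
        rw [hp]
        calc 1 - (M : ℝ) * ε = 1 + M * (-ε) := by ring
          _ ≤ (1 + (-ε)) ^ M := this
          _ = (1 - ε) ^ M := by ring_nf
      calc ε * (1 - M * ε) ≤ ε * p ^ M := by
            apply mul_le_mul_of_nonneg_left hbern hε0.le
        _ ≤ ε * (p ^ i * p ^ j) := by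
            apply mul_le_mul_of_nonneg_left hpij hε0.le
        _ = p ^ i * ε * p ^ j := by ring
        _ = wt p w := hval.symm
    have hb0 : (0 : ℝ) ≤ 1 - M * ε := by
      have hMK : (M : ℝ) ≤ K := by
        rw [hK]
        nlinarith [Nat.cast_nonneg (α := ℝ) M, Nat.cast_nonneg (α := ℝ) n]
      have : (M : ℝ) * ε ≤ K * ε := mul_le_mul_of_nonneg_right hMK hε0.le
      have hKε : K * ε < 1 := by
        rw [hε, mul_one_div, div_lt_one (by linarith)]
        linarith
      linarith
    -- sum lower bound
    have hsumY : ((n : ℝ) + 1) * (ε * (1 - M * ε)) ≤ ∑ w ∈ Y, wt p w := by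
      have h1 : Y.card • (ε * (1 - M * ε)) ≤ ∑ w ∈ Y, wt p w :=
        Finset.card_nsmul_le_sum Y _ _ hwt
      rw [nsmul_eq_mul] at h1
      have hcardR : (n : ℝ) + 1 ≤ (Y.card : ℝ) := by
        have : n + 1 ≤ Y.card := hcard
        exact_mod_cast this
      have hb : (0 : ℝ) ≤ ε * (1 - M * ε) := mul_nonneg hε0.le hb0
      nlinarith
    have hsumAn : 1 - (n : ℝ) * ε ≤ wt p (List.replicate n true) := by
      rw [wt_replicate]
      have := one_add_mul_le_pow (a := -ε) (by linarith) n
      rw [hp]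
      calc 1 - (n : ℝ) * ε = 1 + n * (-ε) := by ring
        _ ≤ (1 + (-ε)) ^ n := this
        _ = (1 - ε) ^ n := by ring_nf
    have hsplit : ∑ w ∈ C, wt p w
        = wt p (List.replicate n true) + ∑ w ∈ Y, wt p w := by
      rw [hC, Finset.sum_insert han]
    -- combine
    have hεK : (1 : ℝ) - K * ε > 0 := by
      rw [hε, mul_one_div]
      have : K / (K + 2) < 1 := by
        rw [div_lt_one (by linarith)]; linarith
      linarith
    have hexpand : ((n : ℝ) + 1) * (ε * (1 - M * ε)) - (n : ℝ) * ε
        = ε * (1 - K * ε) := by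
      rw [hK]; ring
    have hgt : (1 : ℝ) < ∑ w ∈ C, wt p w := by
      rw [hsplit]
      have : 0 < ε * (1 - K * ε) := mul_pos hε0 hεK
      nlinarith
    linarith
  -- finish
  have hfin : X.Finite := by
    by_contra hinf
    have hinf' : X.Infinite := hinf
    obtain ⟨Y, hYsub, hYcard⟩ := hinf'.exists_subset_card_eq (n + 1)
    have := key Y hYsub
    omega
  refine ⟨hfin, ?_⟩
  rw [Set.ncard_eq_toFinset_card X hfin]
  exact key hfin.toFinset (by simp)
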